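/- Let l ≥ 1, q ≥ 1, p ≥ l+1, and let ψ : 𝕊^l → ℝ^q be a C¹ map. Define ψ̄ : ℝ^{l+1}∖{0} → ℝ^q by ψ̄(x) = ψ(x/‖x‖). If ∫_{B_1(0)} ‖Dψ̄(x)‖^p dx < ∞, then ψ (and hence ψ̄) is constant. -/

import Mathlib

open scoped Manifold
open MeasureTheory
open scoped ENNReal

/-- The Hilbert–Schmidt norm of a continuous linear map between Euclidean spaces,
computed via the standard orthonormal basis. -/
noncomputable def hsNorm {n q : ℕ}
    (T : EuclideanSpace ℝ (Fin n) →L[ℝ] EuclideanSpace ℝ (Fin q)) : ℝ :=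
  Real.sqrt (∑ i, ‖T (EuclideanSpace.single i 1)‖ ^ 2)

lemma hsNorm_nonneg {n q : ℕ} (T : EuclideanSpace ℝ (Fin n) →L[ℝ] EuclideanSpace ℝ (Fin q)) :
    0 ≤ hsNorm T := Real.sqrt_nonneg _

lemma hsNorm_smul {n q : ℕ} (c : ℝ) (T : EuclideanSpace ℝ (Fin n) →L[ℝ] EuclideanSpace ℝ (Fin q)) :
    hsNorm (c • T) = |c| * hsNorm T := by
  unfold hsNorm
  have h : ∀ i : Fin n, ‖(c • T) (EuclideanSpace.single i 1)‖ ^ 2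
      = c ^ 2 * ‖T (EuclideanSpace.single i 1)‖ ^ 2 := by
    intro i
    rw [ContinuousLinearMap.smul_apply, norm_smul, mul_pow, Real.norm_eq_abs, sq_abs]
  simp only [h]
  rw [← Finset.mul_sum, Real.sqrt_mul (sq_nonneg c), Real.sqrt_sq_eq_abs]

lemma hsNorm_eq_zero_iff {n q : ℕ}
    (T : EuclideanSpace ℝ (Fin n) →L[ℝ] EuclideanSpace ℝ (Fin q)) :
    hsNorm T = 0 ↔ T = 0 := by
  constructor
  · intro h
    have hsum : (∑ i, ‖T (EuclideanSpace.single i 1)‖ ^ 2) = 0 := by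
      have := Real.sqrt_eq_zero'.1 h
      have hnn : (0:ℝ) ≤ ∑ i, ‖T (EuclideanSpace.single i 1)‖ ^ 2 :=
        Finset.sum_nonneg fun i _ => sq_nonneg _
      linarith
    have hterm : ∀ i ∈ Finset.univ, ‖T (EuclideanSpace.single (i : Fin n) 1)‖ ^ 2 = 0 :=
      (Finset.sum_eq_zero_iff_of_nonneg (fun i _ => sq_nonneg _)).1 hsum
    have hT : ∀ i : Fin n, T (EuclideanSpace.single i 1) = 0 := by
      intro i
      have := hterm i (Finset.mem_univ i)
      have : ‖T (EuclideanSpace.single i 1)‖ = 0 := by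
        nlinarith [norm_nonneg (T (EuclideanSpace.single i 1))]
      exact norm_eq_zero.1 this
    apply ContinuousLinearMap.coe_injective
    apply Module.Basis.ext (EuclideanSpace.basisFun (Fin n) ℝ).toBasis
    intro i
    simp only [OrthonormalBasis.coe_toBasis, ContinuousLinearMap.coe_coe,
      LinearMap.zero_apply]
    rw [EuclideanSpace.basisFun_apply]
    exact hT i
  · intro h; subst h; simp [hsNorm]

lemma hsNorm_pos {n q : ℕ} {T : EuclideanSpace ℝ (Fin n) →L[ℝ] EuclideanSpace ℝ (Fin q)}
    (hT : T ≠ 0) : 0 < hsNorm T :=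
  lt_of_le_of_ne (hsNorm_nonneg T) (fun h => hT ((hsNorm_eq_zero_iff T).1 h.symm))

lemma continuous_hsNorm {n q : ℕ} :
    Continuous (hsNorm (n := n) (q := q)) := by
  unfold hsNorm
  apply Real.continuous_sqrt.comp
  apply continuous_finset_sum
  intro i _
  exact ((ContinuousLinearMap.apply ℝ (EuclideanSpace ℝ (Fin q))
    (EuclideanSpace.single i 1)).continuous.norm.pow 2)

set_option maxHeartbeats 1000000 in
/-- Let `l ≥ 1`, `q ≥ 1`, `p ≥ l + 1`, let `ψ : 𝕊^l → ℝ^q` be `C¹` and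
let `ψ̄(x) = ψ(x/‖x‖)` be its `0`-homogeneous extension. If the `p`-energy
`∫_{B_1(0)} ‖Dψ̄‖^p` is finite, then `ψ` (and hence `ψ̄`) is constant. -/
theorem homogeneous_extension_finite_energy_implies_constant
    (l q : ℕ) (hl : 1 ≤ l) (hq : 1 ≤ q) (p : ℝ) (hp : (l : ℝ) + 1 ≤ p)
    [Fact (Module.finrank ℝ (EuclideanSpace ℝ (Fin (l + 1))) = l + 1)]
    (ψ : (Metric.sphere (0 : EuclideanSpace ℝ (Fin (l + 1))) 1) → EuclideanSpace ℝ (Fin q))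
    (hψ : ContMDiff (𝓡 l) 𝓘(ℝ, EuclideanSpace ℝ (Fin q)) 1 ψ)
    (ψbar : EuclideanSpace ℝ (Fin (l + 1)) → EuclideanSpace ℝ (Fin q))
    (hψbar : ∀ (y : Metric.sphere (0 : EuclideanSpace ℝ (Fin (l + 1))) 1) (c : ℝ), 0 < c →
      ψbar (c • (y : EuclideanSpace ℝ (Fin (l + 1)))) = ψ y)
    (hfin : (∫⁻ x in Metric.ball (0 : EuclideanSpace ℝ (Fin (l + 1))) 1,
        ENNReal.ofReal (hsNorm (fderiv ℝ ψbar x) ^ p)) ≠ ⊤) :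
    (∀ y₁ y₂ : Metric.sphere (0 : EuclideanSpace ℝ (Fin (l + 1))) 1, ψ y₁ = ψ y₂) ∧
    ∀ x₁ x₂ : EuclideanSpace ℝ (Fin (l + 1)), x₁ ≠ 0 → x₂ ≠ 0 → ψbar x₁ = ψbar x₂ := by
  classical
  -- notation
  have proj_mem : ∀ x : EuclideanSpace ℝ (Fin (l + 1)), x ≠ 0 →
      (‖x‖⁻¹ • x) ∈ Metric.sphere (0 : EuclideanSpace ℝ (Fin (l + 1))) 1 := by
    intro x hx
    have hxn : ‖x‖ ≠ 0 := norm_ne_zero_iff.2 hx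
    simp [mem_sphere_iff_norm, norm_smul, abs_of_nonneg (inv_nonneg.2 (norm_nonneg x)),
      inv_mul_cancel₀ hxn]
  have hrep : ∀ (x : EuclideanSpace ℝ (Fin (l + 1))) (hx : x ≠ 0),
      ψbar x = ψ ⟨‖x‖⁻¹ • x, proj_mem x hx⟩ := by
    intro x hx
    have hxpos : (0:ℝ) < ‖x‖ := norm_pos_iff.2 hx
    have := hψbar ⟨‖x‖⁻¹ • x, proj_mem x hx⟩ ‖x‖ hxpos
    rw [← this]
    congr 1
    rw [smul_smul, mul_inv_cancel₀ hxpos.ne', one_smul]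
  have hhom : ∀ (x : EuclideanSpace ℝ (Fin (l + 1))), x ≠ 0 → ∀ c : ℝ, 0 < c →
      ψbar (c • x) = ψbar x := by
    intro x hx c hc
    have hcx : c • x ≠ 0 := smul_ne_zero hc.ne' hx
    rw [hrep _ hcx, hrep _ hx]
    have hsub : (⟨‖c • x‖⁻¹ • (c • x), proj_mem _ hcx⟩ :
        Metric.sphere (0 : EuclideanSpace ℝ (Fin (l + 1))) 1) = ⟨‖x‖⁻¹ • x, proj_mem x hx⟩ := by
      apply Subtype.ext
      show ‖c • x‖⁻¹ • (c • x) = ‖x‖⁻¹ • x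
      have hxn : ‖x‖ ≠ 0 := norm_ne_zero_iff.2 hx
      rw [norm_smul, Real.norm_eq_abs, abs_of_pos hc, smul_smul]
      congr 1
      field_simp
    rw [hsub]
  -- Step A: C¹ regularity away from 0
  have hC1 : ∀ x₀ : EuclideanSpace ℝ (Fin (l + 1)), x₀ ≠ 0 → ContDiffAt ℝ 1 ψbar x₀ := by
    intro x₀ hx₀
    have hr : (0:ℝ) < ‖x₀‖ := norm_pos_iff.2 hx₀
    set r : ℝ := ‖x₀‖ with hrdef
    let ρ : ContDiffBump x₀ := ⟨r/4, r/2, by linarith, by linarith⟩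
    set χ : EuclideanSpace ℝ (Fin (l + 1)) → EuclideanSpace ℝ (Fin (l + 1)) :=
      fun x => x₀ + ρ x • (x - x₀) with hχdef
    have hχ0 : ∀ x, χ x ≠ 0 := by
      intro x
      have h1 : ‖χ x - x₀‖ < r := by
        have : χ x - x₀ = ρ x • (x - x₀) := by
          show x₀ + ρ x • (x - x₀) - x₀ = ρ x • (x - x₀)
          rw [add_sub_cancel_left]
        rw [this, norm_smul, Real.norm_eq_abs, abs_of_nonneg ρ.nonneg]
        by_cases hx : dist x x₀ < r/2
        · calc ρ x * ‖x - x₀‖ ≤ 1 * ‖x - x₀‖ :=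
              mul_le_mul_of_nonneg_right ρ.le_one (norm_nonneg _)
            _ = dist x x₀ := by rw [one_mul, dist_eq_norm]
            _ < r := by linarith
        · have : ρ x = 0 := ρ.zero_of_le_dist (le_of_not_gt hx)
          rw [this, zero_mul]; linarith
      intro h
      rw [h, zero_sub, norm_neg] at h1
      exact absurd h1 (lt_irrefl r)
    have hχc : ContDiff ℝ 1 χ :=
      contDiff_const.add (ρ.contDiff.smul (contDiff_id.sub contDiff_const))
    set N : EuclideanSpace ℝ (Fin (l + 1)) → EuclideanSpace ℝ (Fin (l + 1)) :=
      fun x => ‖χ x‖⁻¹ • χ x with hNdef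
    have hNc : ContDiff ℝ 1 N := by
      refine ContDiff.smul (f := fun x => ‖χ x‖⁻¹) (g := χ) ?_ hχc
      exact (hχc.norm ℝ hχ0).inv (fun x => norm_ne_zero_iff.2 (hχ0 x))
    have hNmem : ∀ x, N x ∈ Metric.sphere (0 : EuclideanSpace ℝ (Fin (l + 1))) 1 :=
      fun x => proj_mem _ (hχ0 x)
    have hg : ContMDiff 𝓘(ℝ, EuclideanSpace ℝ (Fin (l + 1))) (𝓡 l) 1
        (Set.codRestrict N _ hNmem) :=
      hNc.contMDiff.codRestrict_sphere hNmem
    have hcomp : ContDiff ℝ 1 (ψ ∘ Set.codRestrict N _ hNmem) :=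
      contMDiff_iff_contDiff.1 (hψ.comp hg)
    apply hcomp.contDiffAt.congr_of_eventuallyEq
    filter_upwards [Metric.ball_mem_nhds x₀ (show (0:ℝ) < r/4 by linarith)] with x hx
    have hd : ‖x - x₀‖ < r/4 := by
      rw [← dist_eq_norm]; exact Metric.mem_ball.1 hx
    have hxne : x ≠ 0 := by
      intro h
      rw [h, zero_sub, norm_neg] at hd
      linarith
    have hρ1 : ρ x = 1 := by
      apply ρ.one_of_mem_closedBall
      exact Metric.ball_subset_closedBall hx
    have hχx : χ x = x := by rw [hχdef]; simp [hρ1]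
    rw [hrep x hxne]
    show ψ _ = ψ _
    have heq : (⟨‖x‖⁻¹ • x, proj_mem x hxne⟩ :
        Metric.sphere (0 : EuclideanSpace ℝ (Fin (l + 1))) 1)
        = Set.codRestrict N _ hNmem x := by
      apply Subtype.ext
      rw [Set.val_codRestrict_apply]
      show ‖x‖⁻¹ • x = N x
      rw [hNdef]
      simp [hχx]
    rw [heq]
  have hdiffAt : ∀ x : EuclideanSpace ℝ (Fin (l + 1)), x ≠ 0 → DifferentiableAt ℝ ψbar x :=
    fun x hx => (hC1 x hx).differentiableAt one_ne_zero
  -- Step C: scaling of the derivative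
  have hscale : ∀ (x : EuclideanSpace ℝ (Fin (l + 1))), x ≠ 0 → ∀ c : ℝ, 0 < c →
      fderiv ℝ ψbar (c • x) = c⁻¹ • fderiv ℝ ψbar x := by
    intro x hx c hc
    have hcx : c • x ≠ 0 := smul_ne_zero hc.ne' hx
    have hinner : HasFDerivAt (fun z : EuclideanSpace ℝ (Fin (l + 1)) => c • z)
        (c • ContinuousLinearMap.id ℝ (EuclideanSpace ℝ (Fin (l + 1)))) x :=
      (hasFDerivAt_id x).const_smul c
    have h1 : HasFDerivAt (fun z : EuclideanSpace ℝ (Fin (l + 1)) => ψbar (c • z))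
        ((fderiv ℝ ψbar (c • x)).comp
          (c • ContinuousLinearMap.id ℝ (EuclideanSpace ℝ (Fin (l + 1))))) x :=
      ((hdiffAt _ hcx).hasFDerivAt).comp x hinner
    have h2 : (fun z : EuclideanSpace ℝ (Fin (l + 1)) => ψbar (c • z)) =ᶠ[nhds x] ψbar := by
      filter_upwards [isOpen_compl_singleton.mem_nhds
        (show x ∈ ({0}ᶜ : Set (EuclideanSpace ℝ (Fin (l + 1)))) from hx)] with z hz
      exact hhom z hz c hc
    have h3 : HasFDerivAt ψbar
        ((fderiv ℝ ψbar (c • x)).comp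
          (c • ContinuousLinearMap.id ℝ (EuclideanSpace ℝ (Fin (l + 1))))) x :=
      h1.congr_of_eventuallyEq h2.symm
    have h4 := h3.fderiv
    have h5 : (fderiv ℝ ψbar (c • x)).comp
        (c • ContinuousLinearMap.id ℝ (EuclideanSpace ℝ (Fin (l + 1))))
        = c • fderiv ℝ ψbar (c • x) := by
      ext v
      simp
    rw [h5] at h4
    rw [h4, smul_smul, inv_mul_cancel₀ hc.ne', one_smul]
  -- Step D: the derivative vanishes identically away from 0
  have key : ∀ x : EuclideanSpace ℝ (Fin (l + 1)), x ≠ 0 → fderiv ℝ ψbar x = 0 := by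
    by_contra hcon
    push_neg at hcon
    obtain ⟨x', hx'0, hx'⟩ := hcon
    have hdim : Module.finrank ℝ (EuclideanSpace ℝ (Fin (l + 1))) = l + 1 :=
      finrank_euclideanSpace_fin
    have hppos : (0:ℝ) ≤ p := by
      have : (0:ℝ) ≤ (l:ℝ) := Nat.cast_nonneg l
      linarith
    have hnx' : (0:ℝ) < ‖x'‖ := norm_pos_iff.2 hx'0
    set u : EuclideanSpace ℝ (Fin (l + 1)) := ‖x'‖⁻¹ • x' with hudef
    have hu0 : u ≠ 0 := smul_ne_zero (inv_ne_zero hnx'.ne') hx'0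
    have hunorm : ‖u‖ = 1 := by
      rw [hudef, norm_smul, Real.norm_eq_abs, abs_of_pos (inv_pos.2 hnx'),
        inv_mul_cancel₀ hnx'.ne']
    have hxu : x' = ‖x'‖ • u := by
      rw [hudef, smul_smul, mul_inv_cancel₀ hnx'.ne', one_smul]
    have hfu : fderiv ℝ ψbar u ≠ 0 := by
      intro h0
      apply hx'
      rw [hxu, hscale u hu0 ‖x'‖ hnx', h0]; ext v; simp
    set ε : ℝ := hsNorm (fderiv ℝ ψbar u) / 2 with hεdef
    have hε : 0 < ε := half_pos (hsNorm_pos hfu)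
    have hcontOn : ContinuousOn (fderiv ℝ ψbar)
        ({0}ᶜ : Set (EuclideanSpace ℝ (Fin (l + 1)))) := by
      have h' : ContDiffOn ℝ 1 ψbar ({0}ᶜ : Set (EuclideanSpace ℝ (Fin (l + 1)))) :=
        fun x hx => (hC1 x hx).contDiffWithinAt
      exact h'.continuousOn_fderiv_of_isOpen isOpen_compl_singleton le_rfl
    have hcontAt : ContinuousAt
        (fun x : EuclideanSpace ℝ (Fin (l + 1)) => hsNorm (fderiv ℝ ψbar x)) u :=
      continuous_hsNorm.continuousAt.comp
        (hcontOn.continuousAt (isOpen_compl_singleton.mem_nhds hu0))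
    obtain ⟨δ, hδpos, hδ⟩ : ∃ δ > 0, ∀ x : EuclideanSpace ℝ (Fin (l + 1)),
        dist x u < δ → ε ≤ hsNorm (fderiv ℝ ψbar x) := by
      rcases Metric.continuousAt_iff.1 hcontAt ε hε with ⟨δ, hδpos, H⟩
      refine ⟨δ, hδpos, fun x hx => ?_⟩
      have h1 := H hx
      rw [Real.dist_eq] at h1
      have habs := abs_lt.1 h1
      have h2ε : hsNorm (fderiv ℝ ψbar u) = 2 * ε := by rw [hεdef]; ring
      linarith [habs.1]
    set c : ℝ := min δ (1/4) with hcdef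
    have hcpos : 0 < c := lt_min hδpos (by norm_num)
    have hcle : c ≤ 1/4 := min_le_right _ _
    have hcball : ∀ x : EuclideanSpace ℝ (Fin (l + 1)),
        dist x u < c → ε ≤ hsNorm (fderiv ℝ ψbar x) :=
      fun x hx => hδ x (lt_of_lt_of_le hx (min_le_left _ _))
    set r : ℕ → ℝ := fun k => (2:ℝ)⁻¹ ^ (k+1) with hrdef
    have hrpos : ∀ k, 0 < r k := fun k => pow_pos (by norm_num) _
    have hrle : ∀ k, r k ≤ 1/2 := by
      intro k
      simp only [hrdef]
      calc (2:ℝ)⁻¹ ^ (k+1) ≤ (2:ℝ)⁻¹ ^ 1 :=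
            pow_le_pow_of_le_one (by norm_num) (by norm_num) (by omega)
        _ = 1/2 := by norm_num
    set s : ℕ → Set (EuclideanSpace ℝ (Fin (l + 1))) :=
      fun k => Metric.ball ((r k) • u) (r k * c) with hsdef
    have hwin : ∀ k, ∀ x ∈ s k, (3/4 : ℝ) * r k < ‖x‖ ∧ ‖x‖ < (5/4) * r k := by
      intro k x hx
      have hd : ‖x - r k • u‖ < r k * c := by
        rw [← dist_eq_norm]; exact hx
      have hnru : ‖r k • u‖ = r k := by
        rw [norm_smul, Real.norm_eq_abs, abs_of_pos (hrpos k), hunorm, mul_one]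
      have hub := norm_sub_norm_le x (r k • u)
      have hlb := norm_sub_norm_le (r k • u) x
      rw [norm_sub_rev (r k • u) x] at hlb
      rw [hnru] at hub hlb
      have hrc : r k * c ≤ r k * (1/4) := mul_le_mul_of_nonneg_left hcle (hrpos k).le
      constructor
      · linarith
      · linarith
    have hdisj : Pairwise (Function.onFun Disjoint s) := by
      have H : ∀ j k, j < k → Disjoint (s j) (s k) := by
        intro j k hjk
        rw [Set.disjoint_left]
        intro x hxj hxk
        have w1 := (hwin j x hxj).1
        have w2 := (hwin k x hxk).2
        have hrk : r k ≤ r j / 2 := by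
          simp only [hrdef]
          calc (2:ℝ)⁻¹ ^ (k+1) ≤ (2:ℝ)⁻¹ ^ (j+2) :=
                pow_le_pow_of_le_one (by norm_num) (by norm_num) (by omega)
            _ = (2:ℝ)⁻¹ ^ (j+1) * 2⁻¹ := by rw [pow_succ]
            _ = (2:ℝ)⁻¹ ^ (j+1) / 2 := by ring
        have hj := hrpos j
        linarith
      intro j k hne
      rcases lt_or_gt_of_ne hne with h | h
      · exact H j k h
      · exact (H k j h).symm
    have hsub : ∀ k, s k ⊆ Metric.ball (0 : EuclideanSpace ℝ (Fin (l + 1))) 1 := by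
      intro k x hx
      rw [Metric.mem_ball, dist_zero_right]
      have h1 := (hwin k x hx).2
      have h2 := hrle k
      have h3 := hrpos k
      linarith
    have hptwise : ∀ k, ∀ x ∈ s k, ENNReal.ofReal ((ε / r k) ^ p)
        ≤ ENNReal.ofReal (hsNorm (fderiv ℝ ψbar x) ^ p) := by
      intro k x hx
      have hx0 : x ≠ 0 := by
        have h1 := (hwin k x hx).1
        intro h
        rw [h, norm_zero] at h1
        have := hrpos k
        linarith
      set y : EuclideanSpace ℝ (Fin (l + 1)) := (r k)⁻¹ • x with hydef
      have hxy : x = r k • y := by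
        rw [hydef, smul_smul, mul_inv_cancel₀ (hrpos k).ne', one_smul]
      have hy0 : y ≠ 0 := by
        intro h
        apply hx0
        rw [hxy, h, smul_zero]
      have hyball : dist y u < c := by
        have heq : y - u = (r k)⁻¹ • (x - r k • u) := by
          rw [smul_sub, ← hydef, smul_smul, inv_mul_cancel₀ (hrpos k).ne', one_smul]
        rw [dist_eq_norm, heq, norm_smul, Real.norm_eq_abs,
          abs_of_pos (inv_pos.2 (hrpos k))]
        have hd : ‖x - r k • u‖ < r k * c := by
          rw [← dist_eq_norm]; exact hx
        calc (r k)⁻¹ * ‖x - r k • u‖ < (r k)⁻¹ * (r k * c) :=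
              mul_lt_mul_of_pos_left hd (inv_pos.2 (hrpos k))
          _ = c := by rw [← mul_assoc, inv_mul_cancel₀ (hrpos k).ne', one_mul]
      have hεy : ε ≤ hsNorm (fderiv ℝ ψbar y) := hcball y hyball
      have hfd : fderiv ℝ ψbar x = (r k)⁻¹ • fderiv ℝ ψbar y := by
        rw [hxy]
        exact hscale y hy0 (r k) (hrpos k)
      have hhs : hsNorm (fderiv ℝ ψbar x) = (r k)⁻¹ * hsNorm (fderiv ℝ ψbar y) := by
        rw [hfd, hsNorm_smul, abs_of_pos (inv_pos.2 (hrpos k))]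
      apply ENNReal.ofReal_le_ofReal
      apply Real.rpow_le_rpow (by positivity) _ hppos
      rw [hhs, div_eq_inv_mul]
      exact mul_le_mul_of_nonneg_left hεy (inv_nonneg.2 (hrpos k).le)
    have hgmeas : Measurable (fun x : EuclideanSpace ℝ (Fin (l + 1)) =>
        ENNReal.ofReal (hsNorm (fderiv ℝ ψbar x) ^ p)) := by
      apply ENNReal.measurable_ofReal.comp
      apply (Real.continuous_rpow_const hppos).measurable.comp
      exact continuous_hsNorm.measurable.comp (measurable_fderiv ℝ ψbar)
    have hterm : ∀ k : ℕ, ENNReal.ofReal (ε ^ p * c ^ (l+1))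
        * volume (Metric.ball (0 : EuclideanSpace ℝ (Fin (l + 1))) 1)
        ≤ ∫⁻ x in s k, ENNReal.ofReal (hsNorm (fderiv ℝ ψbar x) ^ p) := by
      intro k
      have hstep1 : ∫⁻ _ in s k, ENNReal.ofReal ((ε / r k) ^ p)
          ≤ ∫⁻ x in s k, ENNReal.ofReal (hsNorm (fderiv ℝ ψbar x) ^ p) :=
        setLIntegral_mono hgmeas (hptwise k)
      rw [setLIntegral_const] at hstep1
      have hvol : volume (s k) = ENNReal.ofReal ((r k * c) ^ (l+1))
          * volume (Metric.ball (0 : EuclideanSpace ℝ (Fin (l + 1))) 1) := by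
        have := Measure.addHaar_ball
          (volume : Measure (EuclideanSpace ℝ (Fin (l + 1)))) ((r k) • u)
          (mul_nonneg (hrpos k).le hcpos.le)
        rw [hsdef]
        simp only []
        rw [this, hdim]
      refine le_trans ?_ hstep1
      rw [hvol, ← mul_assoc]
      apply mul_le_mul_left
      rw [← ENNReal.ofReal_mul (by positivity)]
      apply ENNReal.ofReal_le_ofReal
      -- real inequality
      have hrk1 : r k ≤ 1 := le_trans (hrle k) (by norm_num)
      have h1 : (ε / r k) ^ p = ε ^ p * (r k) ^ (-p) := by
        rw [div_eq_mul_inv, Real.mul_rpow hε.le (inv_nonneg.2 (hrpos k).le),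
          Real.inv_rpow (hrpos k).le, ← Real.rpow_neg (hrpos k).le]
      have h2 : ((r k * c) ^ (l+1) : ℝ) = (r k) ^ ((l:ℝ)+1) * c ^ (l+1) := by
        rw [mul_pow]
        congr 1
        rw [← Real.rpow_natCast (r k) (l+1)]
        push_cast
        ring_nf
      have h3 : (1:ℝ) ≤ (r k) ^ ((l:ℝ) + 1 - p) :=
        Real.one_le_rpow_of_pos_of_le_one_of_nonpos (hrpos k) hrk1 (by linarith)
      calc ε ^ p * c ^ (l+1) = ε ^ p * c ^ (l+1) * 1 := by ring
        _ ≤ ε ^ p * c ^ (l+1) * ((r k) ^ ((l:ℝ) + 1 - p)) := by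
            apply mul_le_mul_of_nonneg_left h3 (by positivity)
        _ = (ε / r k) ^ p * ((r k * c) ^ (l+1)) := by
            rw [h1, h2, show (l:ℝ) + 1 - p = -p + ((l:ℝ) + 1) by ring,
              Real.rpow_add (hrpos k)]
            ring
    have hC0 : ENNReal.ofReal (ε ^ p * c ^ (l+1))
        * volume (Metric.ball (0 : EuclideanSpace ℝ (Fin (l + 1))) 1) ≠ 0 := by
      apply mul_ne_zero
      · rw [Ne, ENNReal.ofReal_eq_zero, not_le]
        positivity
      · exact (Metric.measure_ball_pos volume 0 one_pos).ne'
    have htop : (⊤ : ℝ≥0∞) ≤ ∫⁻ x in Metric.ball (0 : EuclideanSpace ℝ (Fin (l + 1))) 1,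
        ENNReal.ofReal (hsNorm (fderiv ℝ ψbar x) ^ p) := by
      calc (⊤ : ℝ≥0∞) = ∑' (_i : ℕ), ENNReal.ofReal (ε ^ p * c ^ (l+1))
            * volume (Metric.ball (0 : EuclideanSpace ℝ (Fin (l + 1))) 1) :=
            (ENNReal.tsum_const_eq_top_of_ne_zero hC0).symm
        _ ≤ ∑' k : ℕ, ∫⁻ x in s k, ENNReal.ofReal (hsNorm (fderiv ℝ ψbar x) ^ p) :=
            ENNReal.tsum_le_tsum hterm
        _ = ∫⁻ x in ⋃ k, s k, ENNReal.ofReal (hsNorm (fderiv ℝ ψbar x) ^ p) :=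
            (lintegral_iUnion (fun k => measurableSet_ball) hdisj _).symm
        _ ≤ ∫⁻ x in Metric.ball (0 : EuclideanSpace ℝ (Fin (l + 1))) 1,
            ENNReal.ofReal (hsNorm (fderiv ℝ ψbar x) ^ p) :=
            lintegral_mono_set (Set.iUnion_subset hsub)
    exact hfin (top_le_iff.1 htop)
  -- Step E: constancy along segments avoiding 0
  have seg : ∀ a b : EuclideanSpace ℝ (Fin (l + 1)), a ≠ 0 → b ≠ 0 →
      (0 : EuclideanSpace ℝ (Fin (l + 1))) ∉ segment ℝ a b → ψbar a = ψbar b := by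
    intro a b ha hb hseg
    have hdiff : ∀ x ∈ segment ℝ a b, DifferentiableAt ℝ ψbar x := by
      intro x hx
      exact hdiffAt x (fun h => hseg (h ▸ hx))
    have hbound : ∀ x ∈ segment ℝ a b, ‖fderiv ℝ ψbar x‖ ≤ 0 := by
      intro x hx
      rw [key x (fun h => hseg (h ▸ hx))]
      simp
    have := (convex_segment a b).norm_image_sub_le_of_norm_fderiv_le hdiff hbound
      (left_mem_segment ℝ a b) (right_mem_segment ℝ a b)
    rw [zero_mul] at this
    have := le_antisymm this (norm_nonneg _)
    rw [norm_eq_zero, sub_eq_zero] at this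
    exact this.symm
  have notspan : ∀ a z : EuclideanSpace ℝ (Fin (l + 1)), a ≠ 0 → (∀ t : ℝ, t • a ≠ z) →
      (0 : EuclideanSpace ℝ (Fin (l + 1))) ∉ segment ℝ a z := by
    intro a z ha hz h0
    rcases h0 with ⟨t, u, ht, hu, htu, heq⟩
    by_cases hu0 : u = 0
    · subst hu0
      have ht1 : t = 1 := by linarith
      subst ht1
      simp at heq
      exact ha heq
    · apply hz (-(t/u))
      have huz : u • z = -(t • a) := by
        rw [eq_neg_iff_add_eq_zero]
        rw [add_comm (u • z) (t • a)]
        exact heq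
      calc (-(t/u)) • a = u⁻¹ • (-(t • a)) := by
            rw [neg_smul, smul_neg, smul_smul, div_eq_inv_mul]
        _ = u⁻¹ • (u • z) := by rw [← huz]
        _ = z := inv_smul_smul₀ hu0 z
  -- choose a point avoiding two given lines
  have hz_exists : ∀ y₁ y₂ : EuclideanSpace ℝ (Fin (l + 1)), y₁ ≠ 0 → y₂ ≠ 0 →
      ∃ z : EuclideanSpace ℝ (Fin (l + 1)), z ≠ 0 ∧ (∀ t : ℝ, t • y₁ ≠ z) ∧
      (∀ t : ℝ, t • y₂ ≠ z) := by
    intro y₁ y₂ h₁ h₂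
    have hl1 : 0 < l + 1 := by omega
    have hl2 : 1 < l + 1 := by omega
    set i0 : Fin (l + 1) := ⟨0, hl1⟩ with hi0
    set i1 : Fin (l + 1) := ⟨1, hl2⟩ with hi1
    have hi : i1 ≠ i0 := by simp [hi0, hi1, Fin.ext_iff]
    set c0 : EuclideanSpace ℝ (Fin (l + 1)) := EuclideanSpace.single i0 (1:ℝ) with hc0
    set c1 : EuclideanSpace ℝ (Fin (l + 1)) := EuclideanSpace.single i1 (1:ℝ) with hc1
    set c2 : EuclideanSpace ℝ (Fin (l + 1)) := c0 + c1 with hc2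
    have e00 : c0 i0 = 1 := by simp [hc0, EuclideanSpace.single_apply]
    have e01 : c0 i1 = 0 := by simp [hc0, EuclideanSpace.single_apply, hi]
    have e10 : c1 i0 = 0 := by simp [hc1, EuclideanSpace.single_apply, hi.symm]
    have e11 : c1 i1 = 1 := by simp [hc1, EuclideanSpace.single_apply]
    have e20 : c2 i0 = 1 := by
      have : c2 i0 = c0 i0 + c1 i0 := rfl
      rw [this, e00, e10]; ring
    have e21 : c2 i1 = 1 := by
      have : c2 i1 = c0 i1 + c1 i1 := rfl
      rw [this, e01, e11]; ring
    -- a determinant criterion for non-proportionality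
    have np : ∀ v w : EuclideanSpace ℝ (Fin (l + 1)),
        v i0 * w i1 ≠ v i1 * w i0 → ∀ t : ℝ, t • v ≠ w := by
      intro v w hdet t ht
      apply hdet
      have h0 : w i0 = t * v i0 := by rw [← ht]; rfl
      have h1 : w i1 = t * v i1 := by rw [← ht]; rfl
      rw [h0, h1]; ring
    have np01 : ∀ t : ℝ, t • c0 ≠ c1 := np c0 c1 (by rw [e00, e01, e11, e10]; norm_num)
    have np02 : ∀ t : ℝ, t • c0 ≠ c2 := np c0 c2 (by rw [e00, e01, e21, e20]; norm_num)
    have np12 : ∀ t : ℝ, t • c1 ≠ c2 := np c1 c2 (by rw [e10, e11, e21, e20]; norm_num)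
    have np10 : ∀ t : ℝ, t • c1 ≠ c0 := np c1 c0 (by rw [e10, e11, e00, e01]; norm_num)
    have np20 : ∀ t : ℝ, t • c2 ≠ c0 := np c2 c0 (by rw [e20, e21, e00, e01]; norm_num)
    have np21 : ∀ t : ℝ, t • c2 ≠ c1 := np c2 c1 (by rw [e20, e21, e10, e11]; norm_num)
    have hc0ne : c0 ≠ 0 := by
      intro h; have := congrArg (fun v : EuclideanSpace ℝ (Fin (l + 1)) => v i0) h
      simp only at this; rw [e00] at this; simpa using this
    have hc1ne : c1 ≠ 0 := by
      intro h; have := congrArg (fun v : EuclideanSpace ℝ (Fin (l + 1)) => v i1) h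
      simp only at this; rw [e11] at this; simpa using this
    have hc2ne : c2 ≠ 0 := by
      intro h; have := congrArg (fun v : EuclideanSpace ℝ (Fin (l + 1)) => v i0) h
      simp only at this; rw [e20] at this; simpa using this
    -- a line through a nonzero point hits at most one of two non-proportional points
    have uniq : ∀ y v w : EuclideanSpace ℝ (Fin (l + 1)), v ≠ 0 → (∀ t : ℝ, t • v ≠ w) →
        (∃ r : ℝ, r • y = v) → ∀ s : ℝ, s • y ≠ w := by
      intro y v w hv hnp hr s hs
      obtain ⟨r, hr⟩ := hr
      have hr0 : r ≠ 0 := by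
        intro h; subst h; simp at hr; exact hv hr.symm
      apply hnp (s * r⁻¹)
      rw [← hr, smul_smul, mul_assoc, inv_mul_cancel₀ hr0, mul_one, hs]
    by_cases k10 : ∃ t : ℝ, t • y₁ = c0
    · by_cases k21 : ∃ t : ℝ, t • y₂ = c1
      · exact ⟨c2, hc2ne, fun t => uniq y₁ c0 c2 hc0ne np02 k10 t,
          fun t => uniq y₂ c1 c2 hc1ne np12 k21 t⟩
      · by_cases k22 : ∃ t : ℝ, t • y₂ = c2
        · exact ⟨c1, hc1ne, fun t => uniq y₁ c0 c1 hc0ne np01 k10 t,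
            fun t => uniq y₂ c2 c1 hc2ne np21 k22 t⟩
        · push_neg at k21
          exact ⟨c1, hc1ne, fun t => uniq y₁ c0 c1 hc0ne np01 k10 t, k21⟩
    · by_cases k20 : ∃ t : ℝ, t • y₂ = c0
      · by_cases k11 : ∃ t : ℝ, t • y₁ = c1
        · exact ⟨c2, hc2ne, fun t => uniq y₁ c1 c2 hc1ne np12 k11 t,
            fun t => uniq y₂ c0 c2 hc0ne np02 k20 t⟩
        · push_neg at k11
          exact ⟨c1, hc1ne, k11, fun t => uniq y₂ c0 c1 hc0ne np01 k20 t⟩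
      · push_neg at k10 k20
        exact ⟨c0, hc0ne, k10, k20⟩
  -- conclusion
  have main : ∀ x₁ x₂ : EuclideanSpace ℝ (Fin (l + 1)), x₁ ≠ 0 → x₂ ≠ 0 →
      ψbar x₁ = ψbar x₂ := by
    intro x₁ x₂ h₁ h₂
    obtain ⟨z, hz0, hz1, hz2⟩ := hz_exists x₁ x₂ h₁ h₂
    have e1 : ψbar x₁ = ψbar z := seg x₁ z h₁ hz0 (notspan x₁ z h₁ hz1)
    have e2 : ψbar x₂ = ψbar z := seg x₂ z h₂ hz0 (notspan x₂ z h₂ hz2)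
    rw [e1, e2]
  refine ⟨?_, main⟩
  intro y₁ y₂
  have hy₁ : (y₁ : EuclideanSpace ℝ (Fin (l + 1))) ≠ 0 := ne_zero_of_mem_unit_sphere y₁
  have hy₂ : (y₂ : EuclideanSpace ℝ (Fin (l + 1))) ≠ 0 := ne_zero_of_mem_unit_sphere y₂
  have e1 : ψbar y₁ = ψ y₁ := by simpa using hψbar y₁ 1 one_pos
  have e2 : ψbar y₂ = ψ y₂ := by simpa using hψbar y₂ 1 one_pos
  rw [← e1, ← e2]
  exact main _ _ hy₁ hy₂
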